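/- arXiv:1902.04399 — 7 statements merged into one kernel-verified Lean document; each statement's English description precedes it below -/
import Mathlib

section
/- For all nonzero functions g, h in L^p of a measure space with p > 2, one has ‖g+h‖_p ≤ (1 - (‖g‖_p ‖h‖_p / (‖g‖_p + ‖h‖_p)^2) ‖ |g|^{p/2}/‖g‖_p^{p/2} - |h|^{p/2}/‖h‖_p^{p/2} ‖_2^2 )^{1/p} (‖g‖_p + ‖h‖_p). -/
open MeasureTheory

private lemma sq_rpow_half_aux (p : ℝ) {x : ℝ} (hx : 0 ≤ x) : (x ^ (p / 2)) ^ 2 = x ^ p := by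
  rw [← Real.rpow_natCast (x ^ (p / 2)) 2, ← Real.rpow_mul hx]
  norm_num

private lemma key_pt_aux (p : ℝ) (hp : 2 ≤ p) (a b G H : ℝ) (ha : 0 ≤ a) (hb : 0 ≤ b)
    (hG : 0 < G) (hH : 0 < H) :
    ((a + b) / (G + H)) ^ p
      ≤ (G / (G + H) * (a ^ (p / 2) / G ^ (p / 2))
          + H / (G + H) * (b ^ (p / 2) / H ^ (p / 2))) ^ 2 := by
  have hGH : 0 < G + H := by linarith
  have ht : (0:ℝ) ≤ G / (G + H) := by positivity
  have hs : (0:ℝ) ≤ H / (G + H) := by positivity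
  have hts : G / (G + H) + H / (G + H) = 1 := by field_simp
  have conv := (convexOn_rpow (by linarith : (1:ℝ) ≤ p / 2)).2
    (Set.mem_Ici.2 (div_nonneg ha hG.le)) (Set.mem_Ici.2 (div_nonneg hb hH.le)) ht hs hts
  simp only [smul_eq_mul] at conv
  have h1 : G / (G + H) * (a / G) + H / (G + H) * (b / H) = (a + b) / (G + H) := by
    field_simp
  rw [h1] at conv
  rw [Real.div_rpow ha hG.le, Real.div_rpow hb hH.le] at conv
  have h2 : ((a + b) / (G + H)) ^ p = (((a + b) / (G + H)) ^ (p / 2)) ^ 2 :=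
    (sq_rpow_half_aux p (by positivity)).symm
  rw [h2]
  exact pow_le_pow_left₀ (Real.rpow_nonneg (by positivity) _) conv 2

theorem improved_triangle_inequality
    {α : Type*} [MeasurableSpace α] (μ : Measure α) (p : ℝ) (hp : 2 < p)
    (g h : α → ℂ)
    (hg : AEStronglyMeasurable g μ) (hh : AEStronglyMeasurable h μ)
    (hgI : Integrable (fun x => ‖g x‖ ^ p) μ)
    (hhI : Integrable (fun x => ‖h x‖ ^ p) μ)
    (hgne : 0 < ∫ x, ‖g x‖ ^ p ∂μ) (hhne : 0 < ∫ x, ‖h x‖ ^ p ∂μ)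
    (G H : ℝ)
    (hG : G = (∫ x, ‖g x‖ ^ p ∂μ) ^ (1 / p))
    (hH : H = (∫ x, ‖h x‖ ^ p ∂μ) ^ (1 / p)) :
    (∫ x, ‖g x + h x‖ ^ p ∂μ) ^ (1 / p)
      ≤ (1 - (G * H / (G + H) ^ 2) *
          ∫ x, (‖g x‖ ^ (p / 2) / G ^ (p / 2) - ‖h x‖ ^ (p / 2) / H ^ (p / 2)) ^ 2 ∂μ)
            ^ (1 / p) * (G + H) := by
  have hp0 : 0 < p := by linarith
  have hG0 : 0 < G := by rw [hG]; exact Real.rpow_pos_of_pos hgne _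
  have hH0 : 0 < H := by rw [hH]; exact Real.rpow_pos_of_pos hhne _
  have hGH : 0 < G + H := by linarith
  have hGp : G ^ p = ∫ x, ‖g x‖ ^ p ∂μ := by
    rw [hG, ← Real.rpow_mul hgne.le, one_div_mul_cancel hp0.ne', Real.rpow_one]
  have hHp : H ^ p = ∫ x, ‖h x‖ ^ p ∂μ := by
    rw [hH, ← Real.rpow_mul hhne.le, one_div_mul_cancel hp0.ne', Real.rpow_one]
  -- abbreviations
  set t : ℝ := G / (G + H) with hts'
  set s : ℝ := H / (G + H) with hss'
  -- squared normalized functions are integrable with integral 1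
  have hu2eq : (fun x => (‖g x‖ ^ (p / 2) / G ^ (p / 2)) ^ 2)
      = fun x => ‖g x‖ ^ p / G ^ p := by
    funext x
    rw [div_pow, sq_rpow_half_aux p (norm_nonneg _), sq_rpow_half_aux p hG0.le]
  have hv2eq : (fun x => (‖h x‖ ^ (p / 2) / H ^ (p / 2)) ^ 2)
      = fun x => ‖h x‖ ^ p / H ^ p := by
    funext x
    rw [div_pow, sq_rpow_half_aux p (norm_nonneg _), sq_rpow_half_aux p hH0.le]
  have hu2I : Integrable (fun x => (‖g x‖ ^ (p / 2) / G ^ (p / 2)) ^ 2) μ := by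
    rw [hu2eq]; exact hgI.div_const _
  have hv2I : Integrable (fun x => (‖h x‖ ^ (p / 2) / H ^ (p / 2)) ^ 2) μ := by
    rw [hv2eq]; exact hhI.div_const _
  have hu2int : ∫ x, (‖g x‖ ^ (p / 2) / G ^ (p / 2)) ^ 2 ∂μ = 1 := by
    rw [hu2eq, integral_div, hGp, div_self hgne.ne']
  have hv2int : ∫ x, (‖h x‖ ^ (p / 2) / H ^ (p / 2)) ^ 2 ∂μ = 1 := by
    rw [hv2eq, integral_div, hHp, div_self hhne.ne']
  -- measurability
  have hum : AEStronglyMeasurable (fun x => ‖g x‖ ^ (p / 2) / G ^ (p / 2)) μ :=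
    ((hg.norm.aemeasurable.pow_const (p / 2)).div_const _).aestronglyMeasurable
  have hvm : AEStronglyMeasurable (fun x => ‖h x‖ ^ (p / 2) / H ^ (p / 2)) μ :=
    ((hh.norm.aemeasurable.pow_const (p / 2)).div_const _).aestronglyMeasurable
  -- the cross term is integrable
  have hsumI : Integrable
      (fun x => (‖g x‖ ^ (p / 2) / G ^ (p / 2)) ^ 2 + (‖h x‖ ^ (p / 2) / H ^ (p / 2)) ^ 2) μ :=
    hu2I.add hv2I
  have huvI : Integrable
      (fun x => (‖g x‖ ^ (p / 2) / G ^ (p / 2)) * (‖h x‖ ^ (p / 2) / H ^ (p / 2))) μ := by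
    refine Integrable.mono'
      (g := fun x => ((‖g x‖ ^ (p / 2) / G ^ (p / 2)) ^ 2 + (‖h x‖ ^ (p / 2) / H ^ (p / 2)) ^ 2) / 2)
      (hsumI.div_const 2) (hum.mul hvm) ?_
    filter_upwards with x
    have h1 : 0 ≤ ‖g x‖ ^ (p / 2) / G ^ (p / 2) := by positivity
    have h2 : 0 ≤ ‖h x‖ ^ (p / 2) / H ^ (p / 2) := by positivity
    rw [Real.norm_eq_abs, abs_of_nonneg (mul_nonneg h1 h2)]
    nlinarith [sq_nonneg (‖g x‖ ^ (p / 2) / G ^ (p / 2) - ‖h x‖ ^ (p / 2) / H ^ (p / 2))]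
  -- the difference squared is integrable
  have hdiffeq : (fun x => (‖g x‖ ^ (p / 2) / G ^ (p / 2) - ‖h x‖ ^ (p / 2) / H ^ (p / 2)) ^ 2)
      = fun x => ((‖g x‖ ^ (p / 2) / G ^ (p / 2)) ^ 2 + (‖h x‖ ^ (p / 2) / H ^ (p / 2)) ^ 2)
          - 2 * ((‖g x‖ ^ (p / 2) / G ^ (p / 2)) * (‖h x‖ ^ (p / 2) / H ^ (p / 2))) := by
    funext x; ring
  have hdiffI : Integrable
      (fun x => (‖g x‖ ^ (p / 2) / G ^ (p / 2) - ‖h x‖ ^ (p / 2) / H ^ (p / 2)) ^ 2) μ := by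
    rw [hdiffeq]; exact hsumI.sub (huvI.const_mul 2)
  have hDint : ∫ x, (‖g x‖ ^ (p / 2) / G ^ (p / 2) - ‖h x‖ ^ (p / 2) / H ^ (p / 2)) ^ 2 ∂μ
      = 2 - 2 * ∫ x, (‖g x‖ ^ (p / 2) / G ^ (p / 2)) * (‖h x‖ ^ (p / 2) / H ^ (p / 2)) ∂μ := by
    have h2uvI : Integrable (fun x =>
        2 * ((‖g x‖ ^ (p / 2) / G ^ (p / 2)) * (‖h x‖ ^ (p / 2) / H ^ (p / 2)))) μ :=
      huvI.const_mul 2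
    rw [hdiffeq, integral_sub hsumI h2uvI, integral_add hu2I hv2I,
      integral_const_mul, hu2int, hv2int]
    norm_num
  -- RHS integrand
  set φ : α → ℝ := fun x => (G + H) ^ p *
      (t * (‖g x‖ ^ (p / 2) / G ^ (p / 2)) + s * (‖h x‖ ^ (p / 2) / H ^ (p / 2))) ^ 2 with hφ
  have hφeq : φ = fun x =>
      ((G + H) ^ p * t ^ 2) * (‖g x‖ ^ (p / 2) / G ^ (p / 2)) ^ 2
      + ((G + H) ^ p * s ^ 2) * (‖h x‖ ^ (p / 2) / H ^ (p / 2)) ^ 2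
      + ((G + H) ^ p * (2 * t * s)) *
          ((‖g x‖ ^ (p / 2) / G ^ (p / 2)) * (‖h x‖ ^ (p / 2) / H ^ (p / 2))) := by
    funext x; simp only [hφ]; ring
  have hcu : Integrable (fun x => ((G + H) ^ p * t ^ 2) * (‖g x‖ ^ (p / 2) / G ^ (p / 2)) ^ 2) μ :=
    hu2I.const_mul _
  have hcv : Integrable (fun x => ((G + H) ^ p * s ^ 2) * (‖h x‖ ^ (p / 2) / H ^ (p / 2)) ^ 2) μ :=
    hv2I.const_mul _
  have hcuv : Integrable (fun x => ((G + H) ^ p * (2 * t * s)) *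
      ((‖g x‖ ^ (p / 2) / G ^ (p / 2)) * (‖h x‖ ^ (p / 2) / H ^ (p / 2)))) μ :=
    huvI.const_mul _
  have hcucv : Integrable (fun x =>
      ((G + H) ^ p * t ^ 2) * (‖g x‖ ^ (p / 2) / G ^ (p / 2)) ^ 2
      + ((G + H) ^ p * s ^ 2) * (‖h x‖ ^ (p / 2) / H ^ (p / 2)) ^ 2) μ := hcu.add hcv
  have hquadI : Integrable (fun x =>
      ((G + H) ^ p * t ^ 2) * (‖g x‖ ^ (p / 2) / G ^ (p / 2)) ^ 2
      + ((G + H) ^ p * s ^ 2) * (‖h x‖ ^ (p / 2) / H ^ (p / 2)) ^ 2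
      + ((G + H) ^ p * (2 * t * s)) *
          ((‖g x‖ ^ (p / 2) / G ^ (p / 2)) * (‖h x‖ ^ (p / 2) / H ^ (p / 2)))) μ :=
    hcucv.add hcuv
  have hφI : Integrable φ μ := by
    rw [hφeq]
    exact hquadI
  have hφint : ∫ x, φ x ∂μ = (G + H) ^ p * t ^ 2 + (G + H) ^ p * s ^ 2
      + (G + H) ^ p * (2 * t * s) *
        ∫ x, (‖g x‖ ^ (p / 2) / G ^ (p / 2)) * (‖h x‖ ^ (p / 2) / H ^ (p / 2)) ∂μ := by
    rw [hφeq, integral_add hcucv hcuv, integral_add hcu hcv,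
      integral_const_mul, integral_const_mul, integral_const_mul, hu2int, hv2int]
    ring
  -- pointwise bound
  have hpt : ∀ x, ‖g x + h x‖ ^ p ≤ φ x := by
    intro x
    have h1 : ‖g x + h x‖ ^ p ≤ (‖g x‖ + ‖h x‖) ^ p :=
      Real.rpow_le_rpow (norm_nonneg _) (norm_add_le _ _) hp0.le
    have h2 : (‖g x‖ + ‖h x‖) ^ p = (G + H) ^ p * ((‖g x‖ + ‖h x‖) / (G + H)) ^ p := by
      rw [Real.div_rpow (by positivity) hGH.le]
      field_simp
    have h3 := key_pt_aux p hp.le (‖g x‖) (‖h x‖) G H (norm_nonneg _) (norm_nonneg _) hG0 hH0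
    calc ‖g x + h x‖ ^ p ≤ (‖g x‖ + ‖h x‖) ^ p := h1
      _ = (G + H) ^ p * ((‖g x‖ + ‖h x‖) / (G + H)) ^ p := h2
      _ ≤ φ x := by
          simp only [hφ]
          exact mul_le_mul_of_nonneg_left h3 (Real.rpow_nonneg hGH.le _)
  have hmono : ∫ x, ‖g x + h x‖ ^ p ∂μ ≤ ∫ x, φ x ∂μ :=
    integral_mono_of_nonneg (Filter.Eventually.of_forall fun x => Real.rpow_nonneg (norm_nonneg _) _)
      hφI (Filter.Eventually.of_forall hpt)
  -- compute the RHS of hmono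
  set D : ℝ := ∫ x, (‖g x‖ ^ (p / 2) / G ^ (p / 2) - ‖h x‖ ^ (p / 2) / H ^ (p / 2)) ^ 2 ∂μ with hD
  set C : ℝ := ∫ x, (‖g x‖ ^ (p / 2) / G ^ (p / 2)) * (‖h x‖ ^ (p / 2) / H ^ (p / 2)) ∂μ with hC
  have hfinal : ∫ x, φ x ∂μ = (G + H) ^ p * (1 - (G * H / (G + H) ^ 2) * D) := by
    rw [hφint, hDint, hts', hss']
    have hne : (G + H) ≠ 0 := hGH.ne'
    field_simp
    ring
  have hKle : ∫ x, ‖g x + h x‖ ^ p ∂μ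
      ≤ (G + H) ^ p * (1 - (G * H / (G + H) ^ 2) * D) := hfinal ▸ hmono
  have hint0 : 0 ≤ ∫ x, ‖g x + h x‖ ^ p ∂μ :=
    integral_nonneg fun x => Real.rpow_nonneg (norm_nonneg _) _
  have hK0 : 0 ≤ 1 - (G * H / (G + H) ^ 2) * D := by
    by_contra hcon
    push_neg at hcon
    have hc : 0 < (G + H) ^ p := Real.rpow_pos_of_pos hGH _
    nlinarith
  calc (∫ x, ‖g x + h x‖ ^ p ∂μ) ^ (1 / p)
      ≤ ((G + H) ^ p * (1 - (G * H / (G + H) ^ 2) * D)) ^ (1 / p) :=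
        Real.rpow_le_rpow hint0 hKle (by positivity)
    _ = (1 - (G * H / (G + H) ^ 2) * D) ^ (1 / p) * (G + H) := by
        rw [mul_comm ((G + H) ^ p), Real.mul_rpow hK0 (Real.rpow_nonneg hGH.le _),
          ← Real.rpow_mul hGH.le, mul_one_div, div_self hp0.ne', Real.rpow_one]
end

section
/- Let λ ∈ [0,1], p > 2, and let u, v be nonnegative functions on a measure space with ‖u‖_p = ‖v‖_p = 1. Then ‖λu + (1-λ)v‖_p^p ≤ 1 - λ(1-λ) ‖u^{p/2} - v^{p/2}‖_2^2. -/
open MeasureTheory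

lemma key_pt {p l : ℝ} (hp : 2 < p) (hl0 : 0 ≤ l) (hl1 : l ≤ 1)
    {a b : ℝ} (ha : 0 ≤ a) (hb : 0 ≤ b) :
    (l * a + (1 - l) * b) ^ p
      ≤ l * a ^ p + (1 - l) * b ^ p - l * (1 - l) * (a ^ (p / 2) - b ^ (p / 2)) ^ 2 := by
  have hl1' : 0 ≤ 1 - l := by linarith
  have hp2 : (1 : ℝ) ≤ p / 2 := by linarith
  have hcv := convexOn_rpow hp2
  have hconv : (l * a + (1 - l) * b) ^ (p / 2) ≤ l * a ^ (p / 2) + (1 - l) * b ^ (p / 2) := by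
    have := hcv.2 (Set.mem_Ici.2 ha) (Set.mem_Ici.2 hb) hl0 hl1' (by ring)
    simpa [smul_eq_mul] using this
  have hc0 : 0 ≤ l * a + (1 - l) * b := by positivity
  have hsq : ∀ c : ℝ, 0 ≤ c → c ^ p = (c ^ (p / 2)) ^ 2 := by
    intro c hc
    rw [← Real.rpow_natCast (c ^ (p / 2)) 2, ← Real.rpow_mul hc]
    norm_num
  rw [hsq _ hc0, hsq _ ha, hsq _ hb]
  have h2 : ((l * a + (1 - l) * b) ^ (p / 2)) ^ 2 ≤ (l * a ^ (p / 2) + (1 - l) * b ^ (p / 2)) ^ 2 :=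
    pow_le_pow_left₀ (Real.rpow_nonneg hc0 _) hconv 2
  nlinarith [h2]

theorem convex_combination_lp_bound
    {α : Type*} [MeasurableSpace α] (μ : Measure α) (p : ℝ) (hp : 2 < p)
    (l : ℝ) (hl0 : 0 ≤ l) (hl1 : l ≤ 1)
    (u v : α → ℝ) (hu : Measurable u) (hv : Measurable v)
    (hun : ∀ x, 0 ≤ u x) (hvn : ∀ x, 0 ≤ v x)
    (hup : ∫ x, u x ^ p ∂μ = 1) (hvp : ∫ x, v x ^ p ∂μ = 1) :
    ∫ x, (l * u x + (1 - l) * v x) ^ p ∂μ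
      ≤ 1 - l * (1 - l) * ∫ x, (u x ^ (p / 2) - v x ^ (p / 2)) ^ 2 ∂μ := by
  have hl1' : 0 ≤ 1 - l := by linarith
  -- measurability
  have hrm : ∀ (q : ℝ), 0 ≤ q → ∀ {w : α → ℝ}, Measurable w → Measurable fun x => w x ^ q :=
    fun q hq _ hw => (Real.continuous_rpow_const hq).measurable.comp hw
  have hp0 : (0:ℝ) ≤ p := by linarith
  have hp20 : (0:ℝ) ≤ p / 2 := by linarith
  have hmu : Measurable fun x => u x ^ p := hrm p hp0 hu
  have hmv : Measurable fun x => v x ^ p := hrm p hp0 hv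
  have hmg : Measurable fun x => (u x ^ (p / 2) - v x ^ (p / 2)) ^ 2 :=
    (((hrm _ hp20 hu).sub (hrm _ hp20 hv)).pow_const 2)
  -- integrability of u^p, v^p
  have hIu : Integrable (fun x => u x ^ p) μ := by
    by_contra h
    rw [integral_undef h] at hup; norm_num at hup
  have hIv : Integrable (fun x => v x ^ p) μ := by
    by_contra h
    rw [integral_undef h] at hvp; norm_num at hvp
  have hIsum : Integrable (fun x => 2 * (u x ^ p + v x ^ p)) μ :=
    ((hIu.add hIv).const_mul 2)
  -- integrability of g
  have hsq : ∀ (w : α → ℝ), (∀ x, 0 ≤ w x) → ∀ x, (w x ^ (p / 2)) ^ 2 = w x ^ p := by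
    intro w hw x
    rw [← Real.rpow_natCast (w x ^ (p / 2)) 2, ← Real.rpow_mul (hw x)]
    norm_num
  have hIg : Integrable (fun x => (u x ^ (p / 2) - v x ^ (p / 2)) ^ 2) μ := by
    refine hIsum.mono' hmg.aestronglyMeasurable (Filter.Eventually.of_forall fun x => ?_)
    have h1 := hsq u hun x
    have h2 := hsq v hvn x
    rw [Real.norm_of_nonneg (by positivity)]
    nlinarith [sq_nonneg (u x ^ (p / 2) + v x ^ (p / 2))]
  have hgnn : ∀ x, 0 ≤ (u x ^ (p / 2) - v x ^ (p / 2)) ^ 2 := fun x => sq_nonneg _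
  -- pointwise bound
  have hpt : ∀ x, (l * u x + (1 - l) * v x) ^ p
      ≤ l * u x ^ p + (1 - l) * v x ^ p - l * (1 - l) * (u x ^ (p / 2) - v x ^ (p / 2)) ^ 2 :=
    fun x => key_pt hp hl0 hl1 (hun x) (hvn x)
  -- integrability of RHS and LHS
  have hIrhs : Integrable (fun x =>
      l * u x ^ p + (1 - l) * v x ^ p - l * (1 - l) * (u x ^ (p / 2) - v x ^ (p / 2)) ^ 2) μ :=
    ((hIu.const_mul l).add (hIv.const_mul (1 - l))).sub (hIg.const_mul _)
  have hIlhs : Integrable (fun x => (l * u x + (1 - l) * v x) ^ p) μ := by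
    refine hIrhs.mono' (hrm p hp0 ((hu.const_mul l).add (hv.const_mul (1 - l)))).aestronglyMeasurable
      (Filter.Eventually.of_forall fun x => ?_)
    have h0 : 0 ≤ l * u x + (1 - l) * v x := by
      have := hun x; have := hvn x; positivity
    rw [Real.norm_of_nonneg (Real.rpow_nonneg h0 _)]
    exact hpt x
  calc ∫ x, (l * u x + (1 - l) * v x) ^ p ∂μ
      ≤ ∫ x, (l * u x ^ p + (1 - l) * v x ^ p
          - l * (1 - l) * (u x ^ (p / 2) - v x ^ (p / 2)) ^ 2) ∂μ :=
        integral_mono hIlhs hIrhs hpt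
    _ = l * ∫ x, u x ^ p ∂μ + (1 - l) * ∫ x, v x ^ p ∂μ
          - l * (1 - l) * ∫ x, (u x ^ (p / 2) - v x ^ (p / 2)) ^ 2 ∂μ := by
        have e1 : Integrable (fun x => l * u x ^ p + (1 - l) * v x ^ p) μ :=
          (hIu.const_mul l).add (hIv.const_mul (1 - l))
        rw [integral_sub e1 (hIg.const_mul _), integral_add (hIu.const_mul l)
          (hIv.const_mul (1 - l)), integral_const_mul, integral_const_mul, integral_const_mul]
    _ = 1 - l * (1 - l) * ∫ x, (u x ^ (p / 2) - v x ^ (p / 2)) ^ 2 ∂μ := by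
        rw [hup, hvp]; ring
end

section
/- Let p > 2, N ≥ 2, and let f_1, ..., f_N be nonnegative measurable functions on a probability space with ∑_{j=1}^N f_j = 1 almost everywhere. Then ∑_{j=1}^N ∫ f_j^2 ≤ (∑_{j=1}^N ∫ f_j^p)^{1/(p-1)}. -/
open MeasureTheory Finset

theorem sum_sq_le_sum_pow
    {α : Type*} [MeasurableSpace α] (μ : Measure α) [IsProbabilityMeasure μ]
    (p : ℝ) (hp : 2 < p) (N : ℕ) (hN : 2 ≤ N)
    (f : Fin N → α → ℝ) (hm : ∀ j, Measurable (f j))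
    (hnn : ∀ j x, 0 ≤ f j x)
    (hsum : ∀ᵐ x ∂μ, ∑ j, f j x = 1) :
    ∑ j, ∫ x, f j x ^ 2 ∂μ ≤ (∑ j, ∫ x, f j x ^ p ∂μ) ^ (1 / (p - 1)) := by
  have hp1 : (1:ℝ) < p - 1 := by linarith
  have hp1' : (0:ℝ) < p - 1 := by linarith
  have hp2 : (0:ℝ) < p - 2 := by linarith
  set θ : ℝ := 1 / (p - 1) with hθ
  set G : α → ℝ := fun x => ∑ j, f j x ^ p with hG
  have hGm : Measurable G := by
    apply Finset.measurable_sum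
    intro j _
    exact (hm j).pow measurable_const
  have hGnn : ∀ x, 0 ≤ G x := fun x =>
    Finset.sum_nonneg fun j _ => Real.rpow_nonneg (hnn j x) p
  -- a.e. facts
  have hle1 : ∀ᵐ x ∂μ, ∀ j, f j x ≤ 1 := by
    filter_upwards [hsum] with x hx j
    calc f j x ≤ ∑ i, f i x :=
          Finset.single_le_sum (fun i _ => hnn i x) (Finset.mem_univ j)
      _ = 1 := hx
  have hGle1 : ∀ᵐ x ∂μ, G x ≤ 1 := by
    filter_upwards [hsum, hle1] with x hx h1
    calc G x ≤ ∑ j, f j x := by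
          apply Finset.sum_le_sum
          intro j _
          calc f j x ^ p ≤ f j x ^ (1:ℝ) :=
                Real.rpow_le_rpow_of_exponent_ge' (hnn j x) (h1 j) (by norm_num) (by linarith)
            _ = f j x := Real.rpow_one _
      _ = 1 := hx
  -- pointwise Hölder
  have hpt : ∀ᵐ x ∂μ, ∑ j, f j x ^ 2 ≤ G x ^ θ := by
    filter_upwards [hsum] with x hx
    have hconj : (p-1).HolderConjugate ((p-1)/(p-2)) := by
      rw [Real.holderConjugate_iff]
      constructor
      · exact hp1
      · field_simp
        ring
    have key := Real.inner_le_Lp_mul_Lq Finset.univ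
      (fun j => f j x ^ (p / (p-1))) (fun j => f j x ^ ((p-2)/(p-1))) hconj
    have e1 : ∀ j : Fin N, f j x ^ (p/(p-1)) * f j x ^ ((p-2)/(p-1)) = f j x ^ 2 := by
      intro j
      rw [← Real.rpow_add_of_nonneg (hnn j x) (by positivity) (by positivity)]
      rw [show p/(p-1) + (p-2)/(p-1) = (2:ℝ) by field_simp; ring]
      rw [Real.rpow_two]
    have e2 : ∀ j : Fin N, |f j x ^ (p/(p-1))| ^ (p-1) = f j x ^ p := by
      intro j
      rw [abs_of_nonneg (Real.rpow_nonneg (hnn j x) _),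
        ← Real.rpow_mul (hnn j x)]
      congr 1
      field_simp
    have e3 : ∀ j : Fin N, |f j x ^ ((p-2)/(p-1))| ^ ((p-1)/(p-2)) = f j x := by
      intro j
      rw [abs_of_nonneg (Real.rpow_nonneg (hnn j x) _),
        ← Real.rpow_mul (hnn j x)]
      rw [show (p-2)/(p-1) * ((p-1)/(p-2)) = (1:ℝ) by field_simp]
      exact Real.rpow_one _
    simp only [e1, e2, e3] at key
    rw [hx, Real.one_rpow, mul_one] at key
    exact key
  -- integrability
  have hint2 : ∀ j : Fin N, Integrable (fun x => f j x ^ 2) μ := by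
    intro j
    refine (integrable_const (1:ℝ)).mono' ((hm j).pow_const 2).aestronglyMeasurable ?_
    filter_upwards [hle1] with x h1
    rw [Real.norm_of_nonneg (by positivity)]
    calc f j x ^ 2 ≤ 1 ^ 2 := by
          apply pow_le_pow_left₀ (hnn j x) (h1 j)
      _ = 1 := one_pow 2
  have hintp : ∀ j : Fin N, Integrable (fun x => f j x ^ p) μ := by
    intro j
    refine (integrable_const (1:ℝ)).mono' ((hm j).pow measurable_const).aestronglyMeasurable ?_
    filter_upwards [hle1] with x h1
    rw [Real.norm_of_nonneg (Real.rpow_nonneg (hnn j x) p)]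
    calc f j x ^ p ≤ 1 ^ p := Real.rpow_le_rpow (hnn j x) (h1 j) (by linarith)
      _ = 1 := Real.one_rpow p
  have hintG : Integrable G μ := integrable_finset_sum _ fun j _ => hintp j
  have hintGθ : Integrable (fun x => G x ^ θ) μ := by
    refine (integrable_const (1:ℝ)).mono' (hGm.pow measurable_const).aestronglyMeasurable ?_
    filter_upwards [hGle1] with x h1
    rw [Real.norm_of_nonneg (Real.rpow_nonneg (hGnn x) θ)]
    calc G x ^ θ ≤ 1 ^ θ := Real.rpow_le_rpow (hGnn x) h1 (by positivity)
      _ = 1 := Real.one_rpow θ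
  -- step 1: sum of integrals = integral of sum ≤ ∫ G^θ
  have step1 : ∑ j, ∫ x, f j x ^ 2 ∂μ ≤ ∫ x, G x ^ θ ∂μ := by
    rw [← integral_finset_sum _ fun j _ => hint2 j]
    exact integral_mono_ae (integrable_finset_sum _ fun j _ => hint2 j) hintGθ hpt
  -- step 2: ∫ G^θ ≤ (∫ G)^θ via Hölder against the constant 1
  have step2 : ∫ x, G x ^ θ ∂μ ≤ (∫ x, G x ∂μ) ^ θ := by
    have hconj : (p-1).HolderConjugate ((p-1)/(p-2)) := by
      refine Real.holderConjugate_iff.mpr ⟨hp1, by field_simp; ring⟩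
    have hmem1 : MemLp (fun x => G x ^ θ) (ENNReal.ofReal (p-1)) μ := by
      refine MemLp.of_bound (hGm.pow measurable_const).aestronglyMeasurable 1 ?_
      filter_upwards [hGle1] with x h1
      rw [Real.norm_of_nonneg (Real.rpow_nonneg (hGnn x) θ)]
      calc G x ^ θ ≤ 1 ^ θ := Real.rpow_le_rpow (hGnn x) h1 (by positivity)
        _ = 1 := Real.one_rpow θ
    have hmem2 : MemLp (fun _ : α => (1:ℝ)) (ENNReal.ofReal ((p-1)/(p-2))) μ :=
      memLp_const 1
    have key := integral_mul_le_Lp_mul_Lq_of_nonneg hconj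
      (Filter.Eventually.of_forall fun x => Real.rpow_nonneg (hGnn x) θ)
      (Filter.Eventually.of_forall fun _ => zero_le_one) hmem1 hmem2
    simp only [mul_one, Real.one_rpow] at key
    have e4 : (fun x => (G x ^ θ) ^ (p-1)) = G := by
      funext x
      rw [← Real.rpow_mul (hGnn x), hθ]
      rw [show 1/(p-1) * (p-1) = (1:ℝ) by field_simp]
      exact Real.rpow_one _
    rw [e4] at key
    have h1int : ∫ (_ : α), (1:ℝ) ∂μ = 1 := by simp
    rw [h1int, Real.one_rpow, mul_one] at key
    exact key
  have step3 : ∫ x, G x ∂μ = ∑ j, ∫ x, f j x ^ p ∂μ :=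
    integral_finset_sum _ fun j _ => hintp j
  calc ∑ j, ∫ x, f j x ^ 2 ∂μ ≤ ∫ x, G x ^ θ ∂μ := step1
    _ ≤ (∫ x, G x ∂μ) ^ θ := step2
    _ = (∑ j, ∫ x, f j x ^ p ∂μ) ^ (1/(p-1)) := by rw [step3, hθ]
end

section
/- For every integer N ≥ 2, every real p > 2, and every x ∈ [0, (N-1)/N), with r = r(N,p) = 2N/(2N + (p-2)(2N-1)), one has N ≤ (1 + (N-1) ((1 - Nx/(N-1))^{p/2} / (1+Nx)^{p-1})^r) (1 + Nx). -/
lemma core_pow_aux (M : ℕ) (hM : 1 ≤ M) (t : ℝ) (ht0 : 0 ≤ t) (ht1 : t < M) :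
    (1 - t / M) ^ M * (1 + t) ≤ 1 := by
  have hM0 : (0:ℝ) < M := by exact_mod_cast Nat.pos_of_ne_zero (by omega)
  have hMt : 0 < (M:ℝ) - t := by linarith
  set u : ℝ := t / ((M:ℝ) - t) with hu
  have hu0 : 0 ≤ u := div_nonneg ht0 hMt.le
  have hber : 1 + (M:ℝ) * u ≤ (1 + u) ^ M := one_add_mul_le_pow (by linarith) M
  have htu : t ≤ (M:ℝ) * u := by
    rw [hu, ← mul_div_assoc, le_div_iff₀ hMt]
    nlinarith
  have h1 : 1 + t ≤ (1 + u) ^ M := le_trans (by linarith) hber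
  have hA0 : 0 ≤ 1 - t / M := by
    rw [sub_nonneg, div_le_one hM0]; linarith
  have key : (1 - t / M) * (1 + u) = 1 := by
    rw [hu]; field_simp; ring
  calc (1 - t / M) ^ M * (1 + t) ≤ (1 - t / M) ^ M * (1 + u) ^ M :=
        mul_le_mul_of_nonneg_left h1 (pow_nonneg hA0 M)
    _ = ((1 - t / M) * (1 + u)) ^ M := (mul_pow _ _ _).symm
    _ = 1 := by rw [key, one_pow]

theorem one_variable_inequality_p_gt_two (N : ℕ) (hN : 2 ≤ N) (p : ℝ) (hp : 2 < p)
    (x : ℝ) (hx0 : 0 ≤ x) (hx1 : x < ((N : ℝ) - 1) / N)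
    (r : ℝ) (hr : r = 2 * (N : ℝ) / (2 * (N : ℝ) + (p - 2) * (2 * (N : ℝ) - 1))) :
    (N : ℝ) ≤ (1 + ((N : ℝ) - 1) *
        ((1 - (N : ℝ) * x / ((N : ℝ) - 1)) ^ (p / 2) / (1 + (N : ℝ) * x) ^ (p - 1)) ^ r) *
      (1 + (N : ℝ) * x) := by
  have hn2 : (2:ℝ) ≤ (N:ℝ) := by exact_mod_cast hN
  set n : ℝ := (N:ℝ) with hndef
  have hn0 : 0 < n := by linarith
  have hm0 : (0:ℝ) < n - 1 := by linarith
  set t : ℝ := n * x with htdef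
  have ht0 : 0 ≤ t := mul_nonneg hn0.le hx0
  have ht1 : t < n - 1 := by
    have := (lt_div_iff₀ hn0).mp hx1
    rw [htdef]; linarith
  set A : ℝ := 1 - t / (n - 1) with hAdef
  set B : ℝ := 1 + t with hBdef
  have hA0 : 0 < A := by
    have : t / (n - 1) < 1 := (div_lt_one hm0).mpr ht1
    rw [hAdef]; linarith
  have hB0 : 0 < B := by rw [hBdef]; linarith
  set D : ℝ := 2 * n + (p - 2) * (2 * n - 1) with hDdef
  have hD : 0 < D := by rw [hDdef]; nlinarith
  set b : ℝ := (p - 2) / D with hbdef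
  have hb0 : 0 < b := div_pos (by linarith) hD
  -- rewrite r
  have hrD : r = 2 * n / D := by rw [hr, hDdef]
  have hc : p / 2 * r = 1 - (n - 1) * b := by
    rw [hrD, hbdef]; field_simp; ring
  have hd : (p - 1) * r = 1 + b := by
    rw [hrD, hbdef]; field_simp; ring
  -- rewrite X
  have hX : (A ^ (p/2) / B ^ (p-1)) ^ r = A ^ (p/2 * r) / B ^ ((p-1) * r) := by
    rw [Real.div_rpow (Real.rpow_nonneg hA0.le _) (Real.rpow_nonneg hB0.le _),
      ← Real.rpow_mul hA0.le, ← Real.rpow_mul hB0.le]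
  -- core inequality as rpow
  have hnm : ((N - 1 : ℕ) : ℝ) = n - 1 := by
    rw [hndef]; push_cast [Nat.cast_sub (by omega : 1 ≤ N)]; ring
  have hcore : A ^ ((N - 1 : ℕ)) * B ≤ 1 := by
    have := core_pow_aux (N - 1) (by omega) t ht0 (by rw [hnm]; exact ht1)
    rw [hnm] at this
    exact this
  have hkey : A ^ ((n - 1) * b) * B ^ b ≤ 1 := by
    rw [Real.rpow_mul hA0.le, ← hnm, Real.rpow_natCast,
      ← Real.mul_rpow (pow_nonneg hA0.le _) hB0.le]
    exact Real.rpow_le_one (mul_nonneg (pow_nonneg hA0.le _) hB0.le) hcore hb0.le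
  -- main comparison : A / B ≤ X
  have hXge : A / B ≤ (A ^ (p/2) / B ^ (p-1)) ^ r := by
    rw [hX, hc, hd]
    have hApos : (0:ℝ) < A ^ ((n-1)*b) := Real.rpow_pos_of_pos hA0 _
    have hBpos : (0:ℝ) < B ^ b := Real.rpow_pos_of_pos hB0 _
    have e1 : A ^ (1 - (n-1)*b) = A / A ^ ((n-1)*b) := by
      rw [Real.rpow_sub hA0, Real.rpow_one]
    have e2 : B ^ (1 + b) = B * B ^ b := by
      rw [Real.rpow_add hB0, Real.rpow_one]
    rw [e1, e2]
    rw [div_div, div_le_div_iff₀ hB0 (by positivity)]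
    calc A * (A ^ ((n-1)*b) * (B * B ^ b)) = (A ^ ((n-1)*b) * B ^ b) * (A * B) := by ring
      _ ≤ 1 * (A * B) := by
          apply mul_le_mul_of_nonneg_right hkey (by positivity)
      _ = A * B := one_mul _
  -- finish
  have hAB : A / B * B = A := div_mul_cancel₀ _ hB0.ne'
  have hfin : (1 + (n - 1) * (A / B)) * B = n := by
    have e1 : (1 + (n-1) * (A/B)) * B = B + (n-1) * (A/B * B) := by ring
    rw [e1, hAB, hAdef, hBdef]
    field_simp; ring
  have h2 : (1 + (n - 1) * (A / B)) * B ≤ (1 + (n - 1) * ((A ^ (p/2) / B ^ (p-1)) ^ r)) * B := by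
    apply mul_le_mul_of_nonneg_right _ hB0.le
    have := mul_le_mul_of_nonneg_left hXge hm0.le
    linarith
  linarith [hfin ▸ h2]
end

section
/- For every integer N ≥ 2, every real p ∈ (1,2), and every x ∈ [0, (N-1)/N), with r = r(N,p) = 2N/(2N + (p-2)(2N-1)), one has N ≥ (1 + (N-1) ((1 - Nx/(N-1))^{p/2} / (1+Nx)^{p-1})^r) (1 + Nx). -/
set_option maxHeartbeats 800000

theorem aux_pow_bernoulli (m : ℕ) (s : ℝ) (hs0 : 0 ≤ s) (hs1 : s ≤ 1) :
    (1 - s) ^ m * (1 + (m : ℝ) * s) ≤ 1 := by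
  have h1 : (1 : ℝ) + (m : ℝ) * s ≤ (1 + s) ^ m := one_add_mul_le_pow (by linarith) m
  have h2 : (0:ℝ) ≤ (1 - s) ^ m := pow_nonneg (by linarith) m
  calc (1 - s) ^ m * (1 + (m : ℝ) * s) ≤ (1 - s) ^ m * (1 + s) ^ m :=
        mul_le_mul_of_nonneg_left h1 h2
    _ = ((1 - s) * (1 + s)) ^ m := (mul_pow _ _ _).symm
    _ = (1 - s ^ 2) ^ m := by ring_nf
    _ ≤ 1 := pow_le_one₀ (by nlinarith) (by nlinarith)

theorem one_variable_inequality_p_lt_two (N : ℕ) (hN : 2 ≤ N) (p : ℝ) (hp1 : 1 < p) (hp2 : p < 2)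
    (x : ℝ) (hx0 : 0 ≤ x) (hx1 : x < ((N : ℝ) - 1) / N)
    (r : ℝ) (hr : r = 2 * (N : ℝ) / (2 * (N : ℝ) + (p - 2) * (2 * (N : ℝ) - 1))) :
    (N : ℝ) ≥ (1 + ((N : ℝ) - 1) *
        ((1 - (N : ℝ) * x / ((N : ℝ) - 1)) ^ (p / 2) / (1 + (N : ℝ) * x) ^ (p - 1)) ^ r) *
      (1 + (N : ℝ) * x) := by
  have hn : (2:ℝ) ≤ (N:ℝ) := by exact_mod_cast hN
  set n : ℝ := (N : ℝ) with hndef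
  have hn0 : (0:ℝ) < n := by linarith
  have hn1 : (0:ℝ) < n - 1 := by linarith
  set t : ℝ := n * x with htdef
  have ht0 : 0 ≤ t := mul_nonneg hn0.le hx0
  have ht1 : t < n - 1 := by
    have h := (lt_div_iff₀ hn0).mp hx1
    linarith [h]
  set u : ℝ := 1 - t / (n - 1) with hudef
  set v : ℝ := 1 + t with hvdef
  have hs0 : 0 ≤ t / (n - 1) := div_nonneg ht0 hn1.le
  have hs1 : t / (n - 1) < 1 := (div_lt_one hn1).mpr ht1
  have hu0 : 0 < u := by simp only [hudef]; linarith
  have hu1 : u ≤ 1 := by simp only [hudef]; linarith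
  have hv0 : 0 < v := by simp only [hvdef]; linarith
  set D : ℝ := 2 * n + (p - 2) * (2 * n - 1) with hDdef
  have hD : 0 < D := by nlinarith [mul_pos (by linarith : (0:ℝ) < p - 1) (by linarith : (0:ℝ) < 2 * n - 1)]
  set a : ℝ := (2 - p) / D with hadef
  have ha : 0 < a := div_pos (by linarith) hD
  have hexp1 : p / 2 * r = 1 + (n - 1) * a := by
    rw [hr, hadef, hDdef]
    have hD2 : 2 * n + (p - 2) * (2 * n - 1) ≠ 0 := by rw [← hDdef]; exact hD.ne'
    field_simp
    ring
  have hexp2 : (p - 1) * r = 1 - a := by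
    rw [hr, hadef, hDdef]
    have hD2 : 2 * n + (p - 2) * (2 * n - 1) ≠ 0 := by rw [← hDdef]; exact hD.ne'
    field_simp
    ring
  -- key combinatorial inequality: u^(N-1) * v ≤ 1
  have hcast : ((N - 1 : ℕ) : ℝ) = n - 1 := by
    rw [hndef]; push_cast [Nat.cast_sub (by omega : 1 ≤ N)]; ring
  have hkey : u ^ (N - 1 : ℕ) * v ≤ 1 := by
    have hveq : v = 1 + ((N - 1 : ℕ) : ℝ) * (t / (n - 1)) := by
      rw [hcast, hvdef]
      field_simp
    rw [hudef, hveq]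
    exact aux_pow_bernoulli (N - 1) (t / (n - 1)) hs0 hs1.le
  have hmono : u ^ (n - 1 : ℝ) * v ≤ 1 := by
    rw [← hcast, Real.rpow_natCast]
    exact hkey
  -- main estimate on E^r
  have hE : (u ^ (p / 2) / v ^ (p - 1)) ^ r ≤ u / v := by
    have e1 : (u ^ (p / 2) / v ^ (p - 1)) ^ r = u ^ (p / 2 * r) / v ^ ((p - 1) * r) := by
      rw [Real.div_rpow (Real.rpow_nonneg hu0.le _) (Real.rpow_nonneg hv0.le _),
        ← Real.rpow_mul hu0.le, ← Real.rpow_mul hv0.le]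
    rw [e1, hexp1, hexp2]
    have e2 : u ^ (1 + (n - 1) * a) / v ^ (1 - a) =
        (u / v) * ((u ^ (n - 1 : ℝ)) ^ a * v ^ a) := by
      rw [show (1:ℝ) - a = 1 + (-a) by ring, Real.rpow_add hu0, Real.rpow_add hv0,
        Real.rpow_one, Real.rpow_one, Real.rpow_neg hv0.le,
        Real.rpow_mul hu0.le]
      have hva : (0:ℝ) < v ^ a := Real.rpow_pos_of_pos hv0 a
      field_simp
    rw [e2]
    have e3 : (u ^ (n - 1 : ℝ)) ^ a * v ^ a = (u ^ (n - 1 : ℝ) * v) ^ a :=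
      (Real.mul_rpow (Real.rpow_nonneg hu0.le _) hv0.le).symm
    have e4 : (u ^ (n - 1 : ℝ)) ^ a * v ^ a ≤ 1 := by
      rw [e3]
      exact Real.rpow_le_one (mul_nonneg (Real.rpow_nonneg hu0.le _) hv0.le) hmono ha.le
    have huv : 0 ≤ u / v := div_nonneg hu0.le hv0.le
    calc (u / v) * ((u ^ (n - 1 : ℝ)) ^ a * v ^ a) ≤ (u / v) * 1 :=
          mul_le_mul_of_nonneg_left e4 huv
      _ = u / v := mul_one _
  -- conclude
  have hnv : (n - 1) * u = n - v := by
    rw [hudef, hvdef]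
    field_simp
    ring
  have h5 : (n - 1) * (u ^ (p / 2) / v ^ (p - 1)) ^ r * v ≤ (n - 1) * u := by
    have h := mul_le_mul_of_nonneg_right hE hv0.le
    rw [div_mul_cancel₀ _ (ne_of_gt hv0)] at h
    nlinarith [h]
  show (1 + (n - 1) * (u ^ (p / 2) / v ^ (p - 1)) ^ r) * v ≤ n
  have h6 : (1 + (n - 1) * (u ^ (p / 2) / v ^ (p - 1)) ^ r) * v
      = v + (n - 1) * (u ^ (p / 2) / v ^ (p - 1)) ^ r * v := by ring
  rw [h6]
  clear_value n t u v D a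
  linarith [h5, hnv]
end

section
/- Fix an integer N ≥ 2 and a real p > 2, and suppose r > 0 is such that for all B ∈ [N^{1-p}, 1], 1 ≤ (1 + (N-1)(N ((1/(N(N-1)))(1 - B^{1/(p-1)}))^{p/2} / B)^r)^{p-1} B. Then r ≤ 2N/(2N + (p-2)(2N-1)). -/
open Real Set

set_option maxHeartbeats 1000000 in
theorem sharpness_of_r (N : ℕ) (hN : 2 ≤ N) (p : ℝ) (hp : 2 < p) (r : ℝ) (hr : 0 < r)
    (h : ∀ B : ℝ, B ∈ Set.Icc ((N : ℝ) ^ (1 - p)) 1 →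
      1 ≤ (1 + ((N : ℝ) - 1) *
          ((N : ℝ) * ((1 / ((N : ℝ) * ((N : ℝ) - 1))) * (1 - B ^ (1 / (p - 1)))) ^ (p / 2)
            / B) ^ r) ^ (p - 1) * B) :
    r ≤ 2 * (N : ℝ) / (2 * (N : ℝ) + (p - 2) * (2 * (N : ℝ) - 1)) := by
  have hn2 : (2:ℝ) ≤ (N:ℝ) := by exact_mod_cast hN
  set n : ℝ := (N:ℝ) with hn
  have hn0 : (0:ℝ) < n := by linarith
  have hn1 : (1:ℝ) < n := by linarith
  have hnm : (0:ℝ) < n - 1 := by linarith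
  have hp1 : (1:ℝ) < p := by linarith
  have hpm : (0:ℝ) < p - 1 := by linarith
  set b : ℝ := n ^ (1 - p) with hbdef
  have hb0 : 0 < b := Real.rpow_pos_of_pos hn0 _
  have hb1 : b < 1 := Real.rpow_lt_one_of_one_lt_of_neg hn1 (by linarith)
  set t : ℝ := n ^ (p - 2) with htdef
  have ht0 : 0 < t := Real.rpow_pos_of_pos hn0 _
  -- basic rpow identities
  have hnt : n * t = n ^ (p - 1) := by
    nth_rewrite 1 [← Real.rpow_one n]
    rw [htdef, ← Real.rpow_add hn0]; ring_nf
  have enb : b = (n * t)⁻¹ := by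
    rw [hnt, hbdef, show (1 - p) = -(p-1) by ring, Real.rpow_neg hn0.le]
  have e1 : b ^ (1/(p-1)) = n⁻¹ := by
    rw [hbdef, ← Real.rpow_mul hn0.le, show (1-p)*(1/(p-1)) = -1 by field_simp; ring,
      Real.rpow_neg_one]
  have e2 : b ^ (1/(p-1) - 1) = t := by
    rw [hbdef, ← Real.rpow_mul hn0.le, htdef,
      show (1-p)*(1/(p-1) - 1) = p - 2 by field_simp; ring]
  have eH : 1 / (n * (n - 1)) * (1 - n⁻¹) = n ^ (-2:ℝ) := by
    rw [show (-2:ℝ) = -((2:ℕ):ℝ) by norm_num, Real.rpow_neg hn0.le, Real.rpow_natCast]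
    field_simp
  have eV : (n ^ (-2:ℝ)) ^ (p/2) = (n^2 * t)⁻¹ := by
    rw [← Real.rpow_natCast n 2, htdef, ← Real.rpow_mul hn0.le, ← Real.rpow_add hn0,
      show (-2:ℝ)*(p/2) = -(((2:ℕ):ℝ) + (p-2)) by push_cast; ring, Real.rpow_neg hn0.le]
  have eW : (n ^ (-2:ℝ)) ^ (p/2 - 1) = t⁻¹ := by
    rw [htdef, ← Real.rpow_mul hn0.le,
      show (-2:ℝ)*(p/2 - 1) = -(p-2) by ring, Real.rpow_neg hn0.le]
  have eg1 : n * (n^2 * t)⁻¹ / b = 1 := by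
    rw [enb]
    field_simp
  -- positivity facts
  have hHpos : 0 < 1 / (n * (n - 1)) * (1 - b ^ (1/(p-1))) := by
    rw [e1]
    have : n⁻¹ < 1 := by
      rw [inv_lt_one_iff₀]; right; exact hn1
    have h1 : (0:ℝ) < 1 / (n * (n-1)) := by positivity
    nlinarith
  have hgpos : 0 < n * (1 / (n * (n - 1)) * (1 - b ^ (1/(p-1)))) ^ (p/2) / b :=
    div_pos (mul_pos hn0 (Real.rpow_pos_of_pos hHpos _)) hb0
  have hqpos : 0 < 1 + (n - 1) *
      (n * (1 / (n * (n - 1)) * (1 - b ^ (1/(p-1)))) ^ (p/2) / b) ^ r := by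
    have := mul_pos hnm (Real.rpow_pos_of_pos hgpos r)
    linarith
  -- derivative
  have key : HasDerivAt (fun B : ℝ => (1 + (n - 1) *
        (n * (1 / (n * (n - 1)) * (1 - B ^ (1 / (p - 1)))) ^ (p / 2) / B) ^ r) ^ (p - 1) * B)
      (t * (n - r * (p / 2 + (p - 1) * (n - 1)))) b := by
    have d1 : HasDerivAt (fun B : ℝ => B ^ (1 / (p - 1)))
        ((1 / (p - 1)) * b ^ (1 / (p - 1) - 1)) b :=
      Real.hasDerivAt_rpow_const (Or.inl hb0.ne')
    have d2 := ((d1.const_sub 1).const_mul (1 / (n * (n - 1))))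
    have d3 := d2.rpow_const (p := p/2) (Or.inl hHpos.ne')
    have d4 := d3.const_mul n
    have d5 := d4.div (hasDerivAt_id' (x := b)) hb0.ne'
    have d6 := d5.rpow_const (p := r) (Or.inl hgpos.ne')
    have d7 := (d6.const_mul (n - 1)).const_add 1
    have d8 := d7.rpow_const (p := p - 1) (Or.inl hqpos.ne')
    have d9 := d8.mul (hasDerivAt_id' (x := b))
    convert d9 using 1
    case e'_4 => rfl
    case e'_5 => rfl
    case e'_8 => rfl
    simp only [Pi.div_apply]
    rw [e1, e2, eH, eV, eW, eg1, Real.one_rpow, Real.one_rpow,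
      show (1:ℝ) + (n - 1) * 1 = n by ring, show p - 1 - 1 = p - 2 by ring, ← htdef, ← hnt, enb]
    field_simp
    ring
  -- value at b is 1
  have hfb : (1 + (n - 1) *
        (n * (1 / (n * (n - 1)) * (1 - b ^ (1 / (p - 1)))) ^ (p / 2) / b) ^ r) ^ (p - 1) * b
      = 1 := by
    rw [e1, eH, eV, eg1, Real.one_rpow,
      show (1:ℝ) + (n - 1) * 1 = n by ring, ← hnt, enb]
    field_simp
  -- local min on the right
  have hmin : IsLocalMinOn (fun B : ℝ => (1 + (n - 1) *
        (n * (1 / (n * (n - 1)) * (1 - B ^ (1 / (p - 1)))) ^ (p / 2) / B) ^ r) ^ (p - 1) * B)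
      (Icc b 1) b := by
    filter_upwards [self_mem_nhdsWithin] with x hx
    simp only [hfb]
    exact h x hx
  have hcone : (1 : ℝ) - b ∈ posTangentConeAt (Icc b 1) b :=
    sub_mem_posTangentConeAt_of_segment_subset (by rw [segment_eq_Icc hb1.le])
  have hge := hmin.hasFDerivWithinAt_nonneg key.hasDerivWithinAt hcone
  simp only [ContinuousLinearMap.toSpanSingleton_apply, ContinuousLinearMap.one_apply,
    smul_eq_mul] at hge
  have hd0 : 0 ≤ n - r * (p / 2 + (p - 1) * (n - 1)) := by
    nlinarith [mul_pos (show (0:ℝ) < 1 - b by linarith) ht0]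
  have hden : 0 < 2 * n + (p - 2) * (2 * n - 1) := by nlinarith
  rw [le_div_iff₀ hden]
  nlinarith
end

section
/- Fix an integer N ≥ 3 and a real p > 2. If r > 0 is such that the inequality 1 ≤ (1 + (N-1)(N(1/N² - (a-1/N)²/(N-1)²)^{p/2} / (a^p + (N-1)^{1-p}(1-a)^p))^r)^{p-1} · (a^p + (N-1)^{1-p}(1-a)^p) holds for a = 0, then r ≤ (ln(N-1) - ln(N-2)) / ((p/2 - 1) ln N + ln(N-1) - (p/2) ln(N-2)). -/
set_option maxHeartbeats 1000000

theorem necessary_condition_at_a_zero (N : ℕ) (hN : 3 ≤ N) (p : ℝ) (hp : 2 < p)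
    (r : ℝ) (hr : 0 < r)
    (h : 1 ≤ (1 + ((N : ℝ) - 1) *
          ((N : ℝ) * (1 / (N : ℝ) ^ 2 - ((0 : ℝ) - 1 / N) ^ 2 / ((N : ℝ) - 1) ^ 2) ^ (p / 2)
            / ((0 : ℝ) ^ p + ((N : ℝ) - 1) ^ (1 - p) * (1 - (0 : ℝ)) ^ p)) ^ r) ^ (p - 1)
        * ((0 : ℝ) ^ p + ((N : ℝ) - 1) ^ (1 - p) * (1 - (0 : ℝ)) ^ p)) :
    r ≤ (Real.log ((N : ℝ) - 1) - Real.log ((N : ℝ) - 2)) /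
      ((p / 2 - 1) * Real.log N + Real.log ((N : ℝ) - 1) - (p / 2) * Real.log ((N : ℝ) - 2)) := by
  have hn3 : (3:ℝ) ≤ (N:ℝ) := by exact_mod_cast hN
  set n : ℝ := (N:ℝ) with hn
  have hn0 : 0 < n := by linarith
  have hn1 : 0 < n - 1 := by linarith
  have hn2 : 0 < n - 2 := by linarith
  have hz : (0:ℝ) ^ p = 0 := Real.zero_rpow (by linarith)
  rw [hz] at h
  have hone : ((1:ℝ) - 0) ^ p = 1 := by norm_num
  rw [hone, mul_one, zero_add] at h
  have hinner : 1 / n ^ 2 - ((0:ℝ) - 1 / n) ^ 2 / (n - 1) ^ 2 = (n - 2) / (n * (n - 1) ^ 2) := by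
    field_simp
    ring
  rw [hinner] at h
  set B : ℝ := (n - 2) / (n * (n - 1) ^ 2) with hB
  have hBpos : 0 < B := by positivity
  set C : ℝ := (n - 1) ^ (1 - p) with hC
  have hCpos : 0 < C := Real.rpow_pos_of_pos hn1 _
  set A : ℝ := n * B ^ (p / 2) / C with hA
  have hApos : 0 < A := by
    rw [hA]
    have := Real.rpow_pos_of_pos hBpos (p/2)
    positivity
  have hArpos : 0 < A ^ r := Real.rpow_pos_of_pos hApos r
  -- from h: (n-1)^(p-1) ≤ (1+(n-1)A^r)^(p-1)
  set T : ℝ := 1 + (n - 1) * A ^ r with hT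
  have hTpos : 0 < T := by positivity
  have hpow : (n - 1) ^ (p - 1) ≤ T ^ (p - 1) := by
    have hmul := mul_le_mul_of_nonneg_left h (le_of_lt (Real.rpow_pos_of_pos hn1 (p-1)))
    calc (n - 1) ^ (p - 1) = (n - 1) ^ (p - 1) * 1 := by ring
    _ ≤ (n - 1) ^ (p - 1) * (T ^ (p - 1) * C) := hmul
    _ = T ^ (p - 1) * ((n - 1) ^ (p - 1) * (n - 1) ^ (1 - p)) := by rw [hC]; ring
    _ = T ^ (p - 1) := by
        rw [← Real.rpow_add hn1]
        norm_num
  have hle : n - 1 ≤ T := by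
    by_contra hlt
    push_neg at hlt
    have := Real.rpow_lt_rpow (le_of_lt hTpos) hlt (by linarith : 0 < p - 1)
    linarith
  have hAr : (n - 2) / (n - 1) ≤ A ^ r := by
    rw [div_le_iff₀ hn1]
    nlinarith
  have hlog := Real.log_le_log (by positivity) hAr
  rw [Real.log_rpow hApos, Real.log_div (by linarith) (by linarith)] at hlog
  -- compute log A
  have hlogA : Real.log A = (1 - p / 2) * Real.log n + (p / 2) * Real.log (n - 2)
      - Real.log (n - 1) := by
    rw [hA, hB, hC]
    rw [Real.log_div (by positivity) (ne_of_gt hCpos),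
      Real.log_mul (ne_of_gt hn0) (by positivity),
      Real.log_rpow hBpos, Real.log_rpow hn1,
      Real.log_div (by linarith) (by positivity),
      Real.log_mul (ne_of_gt hn0) (by positivity),
      Real.log_pow]
    push_cast
    ring
  set L0 : ℝ := Real.log n
  set L1 : ℝ := Real.log (n - 1)
  set L2 : ℝ := Real.log (n - 2)
  have h21 : L2 < L1 := Real.log_lt_log hn2 (by linarith)
  have h10 : L1 < L0 := Real.log_lt_log hn1 (by linarith)
  have hD : 0 < (p / 2 - 1) * L0 + L1 - (p / 2) * L2 := by nlinarith
  rw [le_div_iff₀ hD]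
  rw [hlogA] at hlog
  nlinarith
end
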